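/- Let A be a real symmetric n×n matrix and let x be a nonzero vector in ℝⁿ. Set c = cos(A, xxᵀ) = (xᵀAx)/((xᵀx)·‖A‖_F), assume c > 0, and let μ = c·‖A‖_F and s = √(1 − c²). Then |λ₁(A) − μ| ≤ s·|λ₁(A)|, where λ₁(A) is the largest eigenvalue of A. -/

import Mathlib

open Matrix Polynomial BigOperators

/-- The Frobenius norm of a real matrix. -/
noncomputable def frob {m : Type*} [Fintype m] (A : Matrix m m ℝ) : ℝ :=
  Real.sqrt (∑ i, ∑ j, (A i j) ^ 2)

/-- if `c = cos(A, xxᵀ) > 0`, `μ = c‖A‖_F` and `s = √(1 - c²)`, then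
`|λ₁(A) - μ| ≤ s |λ₁(A)|`. -/

lemma eval_charpoly_det {n : ℕ} (B : Matrix (Fin n) (Fin n) ℝ) (t : ℝ) :
    B.charpoly.eval t = (Matrix.diagonal (fun _ : Fin n => t) - B).det := by
  rw [Matrix.charpoly, ← Polynomial.coe_evalRingHom, RingHom.map_det]
  congr 1
  ext i j
  by_cases h : i = j <;>
    simp [Matrix.charmatrix_apply, h, Matrix.diagonal_apply]

lemma eig_root_aux {n : ℕ} (B : Matrix (Fin n) (Fin n) ℝ) (t : ℝ) (v : Fin n → ℝ)
    (hv : v ≠ 0) (hBv : B.mulVec v = t • v) : B.charpoly.eval t = 0 := by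
  rw [eval_charpoly_det]
  rw [← Matrix.exists_mulVec_eq_zero_iff]
  refine ⟨v, hv, ?_⟩
  funext i
  simp [Matrix.sub_mulVec, hBv, Matrix.mulVec_diagonal]

theorem largest_eigenvalue_relative_error
    (n : ℕ) (hn : 0 < n) (A : Matrix (Fin n) (Fin n) ℝ) (hA : A.IsSymm)
    (x : Fin n → ℝ) (hx : x ≠ 0)
    (μ : Fin n → ℝ) (hmono : Antitone μ)
    (hchar : A.charpoly = ∏ i, (X - C (μ i)))
    (c : ℝ) (hc : c = (x ⬝ᵥ A.mulVec x) / ((x ⬝ᵥ x) * frob A))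
    (hcpos : 0 < c)
    (m s : ℝ) (hm : m = c * frob A) (hs : s = Real.sqrt (1 - c ^ 2)) :
    |μ ⟨0, hn⟩ - m| ≤ s * |μ ⟨0, hn⟩| := by
  set L := μ ⟨0, hn⟩ with hL
  have eig_mem : ∀ (t : ℝ) (v : Fin n → ℝ), v ≠ 0 → A.mulVec v = t • v → ∃ j, t = μ j := by
    intro t v hv hAv
    have h0 := eig_root_aux A t v hv hAv
    rw [hchar] at h0
    simp only [Polynomial.eval_prod, Polynomial.eval_sub, Polynomial.eval_X,
      Polynomial.eval_C] at h0
    obtain ⟨j, -, hj⟩ := Finset.prod_eq_zero_iff.mp h0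
    exact ⟨j, by linarith [sub_eq_zero.mp hj]⟩
  have hfrob0 : 0 ≤ frob A := Real.sqrt_nonneg _
  have hxx0 : 0 ≤ x ⬝ᵥ x := by
    simp only [dotProduct]
    exact Finset.sum_nonneg fun i _ => mul_self_nonneg _
  have hden : (x ⬝ᵥ x) * frob A ≠ 0 := by
    intro h
    rw [hc, h, div_zero] at hcpos
    exact lt_irrefl 0 hcpos
  have hfrob : 0 < frob A := lt_of_le_of_ne hfrob0 (fun h => hden (by rw [← h, mul_zero]))
  have hxx : 0 < x ⬝ᵥ x := lt_of_le_of_ne hxx0 (fun h => hden (by rw [← h, zero_mul]))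
  have hN : x ⬝ᵥ A.mulVec x = c * ((x ⬝ᵥ x) * frob A) := by
    rw [hc, div_mul_cancel₀ _ hden]
  have hmR : m * (x ⬝ᵥ x) = x ⬝ᵥ A.mulVec x := by
    rw [hN, hm]; ring
  have hmpos : 0 < m := by
    have h1 : 0 < m * (x ⬝ᵥ x) := by
      rw [hmR, hN]; positivity
    by_contra hle
    push_neg at hle
    nlinarith
  -- eigenvector for L
  have hdetL : (Matrix.diagonal (fun _ : Fin n => L) - A).det = 0 := by
    rw [← eval_charpoly_det, hchar]
    simp only [Polynomial.eval_prod, Polynomial.eval_sub, Polynomial.eval_X, Polynomial.eval_C]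
    exact Finset.prod_eq_zero (Finset.mem_univ ⟨0, hn⟩) (by simp [hL])
  obtain ⟨v, hv, hv0⟩ := (Matrix.exists_mulVec_eq_zero_iff).mpr hdetL
  have hAv : A.mulVec v = L • v := by
    funext i
    have h := congrFun hv0 i
    simp [Matrix.sub_mulVec, Matrix.mulVec_diagonal] at h
    simp only [Pi.smul_apply, smul_eq_mul]
    linarith
  -- L ≤ frob A
  have hvv : 0 < v ⬝ᵥ v := by
    rcases (dotProduct_self_eq_zero (v := v)).not.mpr hv with h
    refine lt_of_le_of_ne ?_ (Ne.symm h)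
    simp only [dotProduct]
    exact Finset.sum_nonneg fun i _ => mul_self_nonneg _
  have hvv' : v ⬝ᵥ v = ∑ j, v j ^ 2 := by
    simp [dotProduct, pow_two]
  have hrow : ∀ i, (A.mulVec v i) ^ 2 ≤ (∑ j, A i j ^ 2) * (v ⬝ᵥ v) := by
    intro i
    have h := Finset.sum_mul_sq_le_sq_mul_sq Finset.univ (fun j => A i j) v
    rw [hvv']
    simpa [Matrix.mulVec, dotProduct] using h
  have hfrob2 : (frob A) ^ 2 = ∑ i, ∑ j, A i j ^ 2 := by
    rw [frob, Real.sq_sqrt]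
    exact Finset.sum_nonneg fun i _ => Finset.sum_nonneg fun j _ => sq_nonneg _
  have hsq : L ^ 2 * (v ⬝ᵥ v) ≤ (frob A) ^ 2 * (v ⬝ᵥ v) := by
    have h1 : ∑ i, (A.mulVec v i) ^ 2 ≤ (∑ i, ∑ j, A i j ^ 2) * (v ⬝ᵥ v) := by
      rw [Finset.sum_mul]
      exact Finset.sum_le_sum fun i _ => hrow i
    have h2 : ∑ i, (A.mulVec v i) ^ 2 = L ^ 2 * (v ⬝ᵥ v) := by
      rw [hAv, hvv', Finset.mul_sum]
      simp [mul_pow]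
    rw [← h2, hfrob2]
    exact h1.trans_eq rfl
  have hL2 : L ^ 2 ≤ (frob A) ^ 2 := le_of_mul_le_mul_right (by simpa [mul_comm] using hsq) hvv
  have hLf : L ≤ frob A := by nlinarith [hfrob0, hL2]
  -- Rayleigh
  have hH : A.IsHermitian := by
    rw [Matrix.IsHermitian]
    ext i j
    simp only [Matrix.conjTranspose_apply, star_trivial]
    exact congrFun (congrFun hA i) j
  set M := L • (1 : Matrix (Fin n) (Fin n) ℝ) - A with hMdef
  have hMH : M.IsHermitian := by
    rw [Matrix.IsHermitian]
    ext i j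
    simp only [hMdef, Matrix.conjTranspose_apply, Matrix.sub_apply, Matrix.smul_apply,
      Matrix.one_apply, star_trivial, smul_eq_mul]
    have hs2 : A j i = A i j := congrFun (congrFun hA i) j
    rw [hs2]
    by_cases h : i = j
    · simp [h]
    · simp [h, Ne.symm h]
  have hMeig : ∀ i, 0 ≤ hMH.eigenvalues i := by
    intro i
    have hbv := hMH.mulVec_eigenvectorBasis i
    set t := hMH.eigenvalues i with ht
    set w : Fin n → ℝ := ⇑(hMH.eigenvectorBasis i) with hw
    have hwne : w ≠ 0 := by
      intro h
      apply hMH.eigenvectorBasis.orthonormal.ne_zero i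
      ext j
      exact congrFun h j
    have hAw : A.mulVec w = (L - t) • w := by
      funext j
      have h := congrFun hbv j
      simp only [hMdef, Matrix.sub_mulVec, Matrix.smul_mulVec, Matrix.one_mulVec,
        Pi.sub_apply, Pi.smul_apply, smul_eq_mul] at h
      simp only [Pi.smul_apply, smul_eq_mul]
      have : (A.mulVec w) j = L * w j - t * w j := by linarith
      rw [this]; ring
    obtain ⟨j, hj⟩ := eig_mem _ w hwne hAw
    have hle : μ j ≤ L := hmono (by simp [Fin.le_def])
    linarith
  have hMpsd := hMH.posSemidef_iff_eigenvalues_nonneg.mpr hMeig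
  have hray0 : 0 ≤ x ⬝ᵥ (M.mulVec x) := by simpa using hMpsd.dotProduct_mulVec_nonneg x
  have hexp : x ⬝ᵥ (M.mulVec x) = L * (x ⬝ᵥ x) - x ⬝ᵥ A.mulVec x := by
    simp [hMdef, Matrix.sub_mulVec, Matrix.smul_mulVec, Matrix.one_mulVec,
      dotProduct_sub, dotProduct_smul, smul_eq_mul]
  have hRay : x ⬝ᵥ A.mulVec x ≤ L * (x ⬝ᵥ x) := by linarith [hexp ▸ hray0]
  have hmL : m ≤ L := by
    have h1 : m * (x ⬝ᵥ x) ≤ L * (x ⬝ᵥ x) := by rw [hmR]; exact hRay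
    exact le_of_mul_le_mul_right h1 hxx
  have hLpos : 0 < L := lt_of_lt_of_le hmpos hmL
  have hc1 : c ≤ 1 := by
    have h1 : c * frob A ≤ 1 * frob A := by rw [one_mul, ← hm]; linarith
    exact le_of_mul_le_mul_right h1 hfrob
  have hs0 : 1 - c ≤ s := by
    rw [hs]
    have h1 : (1 - c) ^ 2 ≤ 1 - c ^ 2 := by nlinarith
    calc 1 - c = Real.sqrt ((1 - c) ^ 2) := (Real.sqrt_sq (by linarith)).symm
      _ ≤ _ := Real.sqrt_le_sqrt h1
  rw [abs_of_nonneg (by linarith : (0:ℝ) ≤ L - m), abs_of_pos hLpos]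
  have hcl : c * L ≤ m := by
    rw [hm]
    exact mul_le_mul_of_nonneg_left hLf hcpos.le
  have key : L - m ≤ (1 - c) * L := by ring_nf; linarith
  have key2 : (1 - c) * L ≤ s * L := mul_le_mul_of_nonneg_right hs0 hLpos.le
  linarith
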